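/- With the matrices M_1, …, M_I defined stage-wise as follows: M_i has p(i)-th row with entry 1−r_i in position p(i) and r_i ρ_k (1+α)/(1−ρ_{p(i)}) in position k ≠ p(i), and unit-vector rows elsewhere, where ρ_k + (1+α)∑_{ℓ≠k}ρ_ℓ < 1 for all k. Then for every k, the k-th row sum of any product M_{i_ℓ} ⋯ M_{i_1} is at most 1; and if some stage i_j with p(i_j) = k and r_{i_j} > 0 appears among i_1, …, i_ℓ, the k-th row sum is strictly less than 1. -/

import Mathlib

open Finset

/-- Row sums of stage-wise products: products of the buffer-occupancy matrices have
row sums at most 1, and the k-th row sum is strictly below 1 once a stage serving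
queue k with positive service ratio has appeared in the product. -/
theorem stmt10 {K ι : Type*} [Fintype K] [DecidableEq K] [Fintype ι]
    (pfun : ι → K) (r : ι → ℝ) (ρ : K → ℝ) (α : ℝ)
    (hρ : ∀ k, 0 < ρ k ∧ ρ k < 1) (hsum : ∑ k, ρ k < 1) (hα : 0 < α)
    (hslack : ∀ k, ρ k + (1 + α) * ∑ ℓ ∈ Finset.univ.erase k, ρ ℓ < 1)
    (hr : ∀ i, 0 ≤ r i ∧ r i ≤ 1)
    (hcover : ∀ k, 0 < ∑ i ∈ Finset.univ.filter (fun i => pfun i = k), r i)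
    (M : ι → Matrix K K ℝ)
    (hM : ∀ i k j, M i k j =
      if k = pfun i then
        (if j = pfun i then 1 - r i else r i * ρ j * (1 + α) / (1 - ρ (pfun i)))
      else (if j = k then 1 else 0)) :
    ∀ (l : List ι) (k : K),
      (∑ j, (l.reverse.map M).prod k j ≤ 1) ∧
      ((∃ i ∈ l, pfun i = k ∧ 0 < r i) → ∑ j, (l.reverse.map M).prod k j < 1) := by
  have hD : ∀ kk : K, 0 < 1 - ρ kk := fun kk => by have := (hρ kk).2; linarith
  -- nonnegativity of matrix entries
  have hMnn : ∀ i m j, 0 ≤ M i m j := by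
    intro i m j
    rw [hM]
    split_ifs with h1 h2
    · linarith [(hr i).2]
    · apply div_nonneg _ (hD (pfun i)).le
      exact mul_nonneg (mul_nonneg (hr i).1 (hρ j).1.le) (by linarith : (0:ℝ) ≤ 1 + α)
    · norm_num
    · norm_num
  -- row sums of non-served rows are exactly 1
  have hMrs_ne : ∀ i m, m ≠ pfun i → ∑ j, M i m j = 1 := by
    intro i m hm
    have : ∀ j, M i m j = if j = m then 1 else 0 := by
      intro j; rw [hM, if_neg hm]
    simp [this]
  -- row sum at the served row
  have hMrs_p : ∀ i, ∑ j, M i (pfun i) j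
      = (1 - r i) + (r i * (1 + α) / (1 - ρ (pfun i))) * ∑ j ∈ univ.erase (pfun i), ρ j := by
    intro i
    rw [← Finset.add_sum_erase _ (fun j => M i (pfun i) j) (Finset.mem_univ (pfun i))]
    congr 1
    · rw [hM]; simp
    · rw [Finset.mul_sum]
      refine Finset.sum_congr rfl fun j hj => ?_
      rw [hM, if_pos rfl, if_neg (Finset.ne_of_mem_erase hj)]
      ring
  have hSlt : ∀ i, (1 + α) * ∑ j ∈ univ.erase (pfun i), ρ j < 1 - ρ (pfun i) := by
    intro i; have := hslack (pfun i); linarith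
  have hSnn : ∀ i, (0:ℝ) ≤ ∑ j ∈ univ.erase (pfun i), ρ j :=
    fun i => Finset.sum_nonneg fun j _ => (hρ j).1.le
  have hclt : ∀ i, (r i * (1 + α) / (1 - ρ (pfun i))) * (∑ j ∈ univ.erase (pfun i), ρ j) ≤ r i ∧
      (0 < r i → (r i * (1 + α) / (1 - ρ (pfun i))) * (∑ j ∈ univ.erase (pfun i), ρ j) < r i) := by
    intro i
    set S := ∑ j ∈ univ.erase (pfun i), ρ j with hS
    have hd := hD (pfun i)
    have h1 : r i * (1 + α) / (1 - ρ (pfun i)) * S = r i * ((1 + α) * S) / (1 - ρ (pfun i)) := by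
      ring
    constructor
    · rw [h1, div_le_iff₀ hd]
      have := (hr i).1
      nlinarith [hSlt i, hSnn i]
    · intro hri
      rw [h1, div_lt_iff₀ hd]
      nlinarith [hSlt i, hSnn i]
  have hMrs_le : ∀ i m, ∑ j, M i m j ≤ 1 := by
    intro i m
    by_cases hm : m = pfun i
    · subst hm
      rw [hMrs_p i]
      linarith [(hclt i).1]
    · exact (hMrs_ne i m hm).le
  have hMrs_lt : ∀ i, 0 < r i → ∑ j, M i (pfun i) j < 1 := by
    intro i hri
    rw [hMrs_p i]
    linarith [(hclt i).2 hri]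
  -- rows that don't serve k strictly are unit vector rows
  have hMid : ∀ i m, ¬(pfun i = m ∧ 0 < r i) → ∀ j, M i m j = if j = m then 1 else 0 := by
    intro i m h j
    by_cases hmp : m = pfun i
    · have hr0 : r i = 0 := by
        rcases lt_or_eq_of_le (hr i).1 with h' | h'
        · exact absurd ⟨hmp.symm, h'⟩ h
        · exact h'.symm
      rw [hM, if_pos hmp, hr0]
      subst hmp
      split_ifs with hj
      · subst hj; norm_num
      · simp
    · rw [hM, if_neg hmp]
  -- strengthened statement by induction
  have key : ∀ (l : List ι) (k : K),
      (∀ j, 0 ≤ (l.reverse.map M).prod k j) ∧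
      (∑ j, (l.reverse.map M).prod k j ≤ 1) ∧
      ((∃ i ∈ l, pfun i = k ∧ 0 < r i) → ∑ j, (l.reverse.map M).prod k j < 1) ∧
      ((¬ ∃ i ∈ l, pfun i = k ∧ 0 < r i) →
        ∀ j, (l.reverse.map M).prod k j = if j = k then 1 else 0) := by
    intro l
    induction l with
    | nil =>
      intro k
      refine ⟨?_, ?_, ?_, ?_⟩
      · intro j; simp [Matrix.one_apply]; split_ifs <;> norm_num
      · simp [Matrix.one_apply]
      · simp
      · intro _ j; simp [Matrix.one_apply, eq_comm]
    | cons i t ih =>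
      intro k
      obtain ⟨ihnn, ihle, ihlt, ihid⟩ := ih k
      have hple : ((i :: t).reverse.map M).prod = (t.reverse.map M).prod * M i := by
        simp
      set Q := (t.reverse.map M).prod with hQdef
      rw [hple]
      have hmul : ∀ j, (Q * M i) k j = ∑ m, Q k m * M i m j := fun j => Matrix.mul_apply
      have hrowsum : ∑ j, (Q * M i) k j = ∑ m, Q k m * ∑ j, M i m j := by
        simp only [hmul]
        rw [Finset.sum_comm]
        exact Finset.sum_congr rfl fun m _ => (Finset.mul_sum _ _ _).symm
      have hble : ∑ m, Q k m * (∑ j, M i m j) ≤ ∑ m, Q k m :=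
        Finset.sum_le_sum fun m _ => mul_le_of_le_one_right (ihnn m) (hMrs_le i m)
      refine ⟨?_, ?_, ?_, ?_⟩
      · intro j
        rw [hmul]
        exact Finset.sum_nonneg fun m _ => mul_nonneg (ihnn m) (hMnn i m j)
      · rw [hrowsum]; exact le_trans hble ihle
      · rintro ⟨i', hi'mem, hi'k, hi'r⟩
        rw [hrowsum]
        by_cases hex : ∃ i'' ∈ t, pfun i'' = k ∧ 0 < r i''
        · exact lt_of_le_of_lt hble (ihlt hex)
        · have hi'i : i' = i := by
            rcases List.mem_cons.mp hi'mem with h | h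
            · exact h
            · exact absurd ⟨i', h, hi'k, hi'r⟩ hex
          rw [hi'i] at hi'k hi'r
          have hQrow := ihid hex
          have : ∑ m, Q k m * ∑ j, M i m j = ∑ j, M i k j := by
            simp [hQrow, ite_mul, Finset.sum_ite_eq']
          rw [this, ← hi'k]
          exact hMrs_lt i hi'r
      · intro hnex j
        have hnext : ¬ ∃ i'' ∈ t, pfun i'' = k ∧ 0 < r i'' := by
          rintro ⟨i'', h1, h2, h3⟩
          exact hnex ⟨i'', List.mem_cons_of_mem i h1, h2, h3⟩
        have hni : ¬(pfun i = k ∧ 0 < r i) := by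
          rintro ⟨h1, h2⟩
          exact hnex ⟨i, List.mem_cons_self, h1, h2⟩
        have hQrow := ihid hnext
        rw [hmul]
        have : ∀ m, Q k m * M i m j = if m = k then M i k j else 0 := by
          intro m
          rw [hQrow m]
          split_ifs with h
          · subst h; ring
          · ring
        simp only [this, Finset.sum_ite_eq', Finset.mem_univ, if_true]
        exact hMid i k hni j
  intro l k
  exact ⟨(key l k).2.1, (key l k).2.2.1⟩
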